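/- For every natural number k and every ε > 0 there exists ν = (2k+3)²/ε such that for every cover U of a metric space X of multiplicity at most k+1 with Lebesgue number greater than ν, the canonical projection p : X → Nerve(U) ⊂ l²(U), defined by the partition of unity φ_U(x) = d(x, X\U) / Σ_{V∈U} d(x, X\V), is ε-Lipschitz. -/

import Mathlib

open Metric Set

/-- A family of subsets covers `X`. -/
def IsCover {X : Type*} [MetricSpace X] (𝔘 : Set (Set X)) : Prop :=
  ∀ x : X, ∃ U ∈ 𝔘, x ∈ U

/-- A cover has multiplicity (order) at most `m` if every point lies in at most `m`
members of the cover. -/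
def MultLE {X : Type*} [MetricSpace X] (m : ℕ) (𝔘 : Set (Set X)) : Prop :=
  ∀ x : X, {U | U ∈ 𝔘 ∧ x ∈ U}.encard ≤ (m : ℕ∞)

/-- The cover has Lebesgue number greater than `d`: for every point there is a member `U`
whose complement is at distance greater than `d`. -/
def LebesgueGT {X : Type*} [MetricSpace X] (d : ℝ) (𝔘 : Set (Set X)) : Prop :=
  ∀ x : X, ∃ U ∈ 𝔘, d < Metric.infDist x Uᶜ

/-- The partition of unity `φ_U(x) = d(x, X\U) / Σ_{V ∈ 𝔘} d(x, X\V)` defining the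
canonical projection to the nerve of the cover `𝔘` (the barycentric coordinate of `p(x)`
at the vertex `U` of the nerve, realized in `ℓ²(𝔘)`). -/
noncomputable def nervePhi {X : Type*} [MetricSpace X] (𝔘 : Set (Set X)) (U : Set X)
    (x : X) : ℝ :=
  Metric.infDist x Uᶜ / ∑' V : 𝔘, Metric.infDist x (V : Set X)ᶜ

set_option maxHeartbeats 1000000 in
/-- For every `k` and every `ε > 0` there is `ν = (2k+3)²/ε` such that for every cover `𝔘`
of a metric space `X` of multiplicity at most `k+1` with Lebesgue number greater than `ν`,
the canonical projection to the nerve is `ε`-Lipschitz (as a map into `ℓ²(𝔘)`, i.e. the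
squared `ℓ²`-distance of the barycentric coordinates is at most `(ε · d(x,y))²`). -/
theorem canonical_projection_lipschitz (k : ℕ) (ε : ℝ) (hε : 0 < ε) :
    ∃ ν : ℝ, ν = (2 * (k : ℝ) + 3) ^ 2 / ε ∧
      ∀ (X : Type) [MetricSpace X] (𝔘 : Set (Set X)),
        IsCover 𝔘 → MultLE (k + 1) 𝔘 → LebesgueGT ν 𝔘 →
        ∀ x y : X,
          ∑' U : 𝔘, (nervePhi 𝔘 U x - nervePhi 𝔘 U y) ^ 2 ≤ (ε * dist x y) ^ 2 := by
  classical
  set c : ℝ := 2 * (k : ℝ) + 3 with hc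
  have hc3 : (3 : ℝ) ≤ c := by
    have : (0:ℝ) ≤ (k:ℝ) := Nat.cast_nonneg k
    simp only [hc]; linarith
  have hc0 : (0:ℝ) < c := by linarith
  refine ⟨c ^ 2 / ε, rfl, ?_⟩
  set ν : ℝ := c ^ 2 / ε with hνdef
  have hν0 : 0 < ν := by positivity
  have hεν : ε * ν = c ^ 2 := by
    rw [hνdef]; field_simp
  intro X _ 𝔘 hcov hmult hleb x y
  set d : ℝ := dist x y with hd
  have hd0 : 0 ≤ d := dist_nonneg
  set f : 𝔘 → X → ℝ := fun U z => Metric.infDist z (↑U : Set X)ᶜ with hfdef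
  have hf0 : ∀ (U : 𝔘) (z : X), 0 ≤ f U z := fun U z => Metric.infDist_nonneg
  have hfmem : ∀ (U : 𝔘) (z : X), z ∉ (U : Set X) → f U z = 0 := fun U z hz =>
    Metric.infDist_zero_of_mem (by simpa using hz)
  have hflip : ∀ (U : 𝔘), |f U x - f U y| ≤ d := by
    intro U
    rw [abs_sub_le_iff]
    constructor
    · have := Metric.infDist_le_infDist_add_dist (s := ((U : Set X))ᶜ) (x := x) (y := y)
      simp only [hfdef]; linarith
    · have := Metric.infDist_le_infDist_add_dist (s := ((U : Set X))ᶜ) (x := y) (y := x)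
      rw [dist_comm] at this
      simp only [hfdef]; linarith
  -- finiteness of the set of members containing a given point
  have hsupp : ∀ z : X, ∃ s : Finset 𝔘, s.card ≤ k + 1 ∧
      ∀ U : 𝔘, z ∈ (U : Set X) → U ∈ s := by
    intro z
    have h1 : ({U : 𝔘 | z ∈ (U : Set X)}).encard ≤ ((k + 1 : ℕ) : ℕ∞) := by
      calc ({U : 𝔘 | z ∈ (U : Set X)}).encard
          = (Subtype.val '' {U : 𝔘 | z ∈ (U : Set X)}).encard :=
            (Set.InjOn.encard_image (Subtype.val_injective.injOn)).symm
        _ ≤ ({U | U ∈ 𝔘 ∧ z ∈ U}).encard := by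
            apply Set.encard_mono
            rintro _ ⟨U, hU, rfl⟩
            exact ⟨U.2, hU⟩
        _ ≤ _ := hmult z
    rw [Set.encard_le_coe_iff] at h1
    obtain ⟨hfin, n₀, hn₀, hn₀le⟩ := h1
    refine ⟨hfin.toFinset, ?_, fun U hU => hfin.mem_toFinset.2 hU⟩
    have := hfin.encard_eq_coe_toFinset_card
    rw [this] at hn₀
    have : hfin.toFinset.card = n₀ := by exact_mod_cast hn₀
    omega
  obtain ⟨sx, hsxcard, hsx⟩ := hsupp x
  obtain ⟨sy, hsycard, hsy⟩ := hsupp y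
  set Ft : Finset 𝔘 := sx ∪ sy with hFt
  have hFtcard : (Ft.card : ℝ) ≤ 2 * (k : ℝ) + 2 := by
    have h1 : Ft.card ≤ sx.card + sy.card := Finset.card_union_le _ _
    have : Ft.card ≤ 2 * k + 2 := by omega
    calc (Ft.card : ℝ) ≤ ((2 * k + 2 : ℕ) : ℝ) := by exact_mod_cast this
      _ = 2 * (k : ℝ) + 2 := by push_cast; ring
  have h0x : ∀ U ∉ Ft, f U x = 0 := by
    intro U hU
    by_contra h
    have hxU : x ∈ (U : Set X) := by
      by_contra hx
      exact h (hfmem U x hx)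
    exact hU (Finset.mem_union_left _ (hsx U hxU))
  have h0y : ∀ U ∉ Ft, f U y = 0 := by
    intro U hU
    by_contra h
    have hyU : y ∈ (U : Set X) := by
      by_contra hy
      exact h (hfmem U y hy)
    exact hU (Finset.mem_union_right _ (hsy U hyU))
  have hsumx : Summable (fun U => f U x) := summable_of_ne_finset_zero h0x
  have hsumy : Summable (fun U => f U y) := summable_of_ne_finset_zero h0y
  set Sx : ℝ := ∑' U : 𝔘, f U x with hSxdef
  set Sy : ℝ := ∑' U : 𝔘, f U y with hSydef
  have hSxsum : Sx = ∑ U ∈ Ft, f U x := tsum_eq_sum h0x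
  have hSysum : Sy = ∑ U ∈ Ft, f U y := tsum_eq_sum h0y
  have hSxν : ν < Sx := by
    obtain ⟨U, hU, hUν⟩ := hleb x
    have h1 : f ⟨U, hU⟩ x ≤ Sx := Summable.le_tsum hsumx _ (fun j _ => hf0 j x)
    have h2 : ν < f ⟨U, hU⟩ x := hUν
    linarith
  have hSyν : ν < Sy := by
    obtain ⟨U, hU, hUν⟩ := hleb y
    have h1 : f ⟨U, hU⟩ y ≤ Sy := Summable.le_tsum hsumy _ (fun j _ => hf0 j y)
    have h2 : ν < f ⟨U, hU⟩ y := hUν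
    linarith
  have hSx0 : 0 < Sx := lt_trans hν0 hSxν
  have hSy0 : 0 < Sy := lt_trans hν0 hSyν
  have hfyle : ∀ U : 𝔘, f U y ≤ Sy := fun U => Summable.le_tsum hsumy U (fun j _ => hf0 j y)
  have hSdiff : |Sy - Sx| ≤ (2 * (k : ℝ) + 2) * d := by
    rw [hSxsum, hSysum, ← Finset.sum_sub_distrib]
    calc |∑ U ∈ Ft, (f U y - f U x)| ≤ ∑ U ∈ Ft, |f U y - f U x| :=
          Finset.abs_sum_le_sum_abs _ _
      _ ≤ ∑ _U ∈ Ft, d := by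
          apply Finset.sum_le_sum
          intro U _
          rw [abs_sub_comm]
          exact hflip U
      _ = (Ft.card : ℝ) * d := by rw [Finset.sum_const, nsmul_eq_mul]
      _ ≤ (2 * (k : ℝ) + 2) * d := mul_le_mul_of_nonneg_right hFtcard hd0
  -- rewrite nervePhi
  have hphix : ∀ U : 𝔘, nervePhi 𝔘 (↑U) x = f U x / Sx := fun U => rfl
  have hphiy : ∀ U : 𝔘, nervePhi 𝔘 (↑U) y = f U y / Sy := fun U => rfl
  -- per-vertex bound
  have key : ∀ U : 𝔘, |nervePhi 𝔘 (↑U) x - nervePhi 𝔘 (↑U) y| ≤ c * d / ν := by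
    intro U
    rw [hphix, hphiy]
    set a : ℝ := f U x with ha
    set b : ℝ := f U y with hb
    have ha0 : 0 ≤ a := hf0 U x
    have hb0 : 0 ≤ b := hf0 U y
    have hab : |a - b| ≤ d := hflip U
    have hbS : b ≤ Sy := hfyle U
    have hnum : |a * Sy - b * Sx| ≤ c * d * Sy := by
      have hrw : a * Sy - b * Sx = (a - b) * Sy + b * (Sy - Sx) := by ring
      rw [hrw]
      calc |(a - b) * Sy + b * (Sy - Sx)| ≤ |(a - b) * Sy| + |b * (Sy - Sx)| :=
            abs_add_le _ _
        _ = |a - b| * Sy + b * |Sy - Sx| := by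
            rw [abs_mul, abs_mul, abs_of_pos hSy0, abs_of_nonneg hb0]
        _ ≤ d * Sy + Sy * ((2 * (k : ℝ) + 2) * d) := by
            have h1 : |a - b| * Sy ≤ d * Sy :=
              mul_le_mul_of_nonneg_right hab hSy0.le
            have h2 : b * |Sy - Sx| ≤ Sy * ((2 * (k : ℝ) + 2) * d) :=
              mul_le_mul hbS hSdiff (abs_nonneg _) hSy0.le
            linarith
        _ = c * d * Sy := by rw [hc]; ring
    have hΔ : a / Sx - b / Sy = (a * Sy - b * Sx) / (Sx * Sy) := by
      field_simp
    rw [hΔ, abs_div, abs_of_pos (mul_pos hSx0 hSy0),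
      div_le_div_iff₀ (mul_pos hSx0 hSy0) hν0]
    have h3 : |a * Sy - b * Sx| * ν ≤ (c * d * Sy) * ν :=
      mul_le_mul_of_nonneg_right hnum hν0.le
    have h4 : (c * d * Sy) * ν ≤ (c * d * Sy) * Sx :=
      mul_le_mul_of_nonneg_left hSxν.le (by positivity)
    calc |a * Sy - b * Sx| * ν ≤ (c * d * Sy) * Sx := le_trans h3 h4
      _ = c * d * (Sx * Sy) := by ring
  -- assemble
  have hΔ0 : ∀ U ∉ Ft, (nervePhi 𝔘 (↑U) x - nervePhi 𝔘 (↑U) y) ^ 2 = 0 := by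
    intro U hU
    rw [hphix, hphiy, h0x U hU, h0y U hU]
    simp
  rw [tsum_eq_sum hΔ0]
  calc ∑ U ∈ Ft, (nervePhi 𝔘 (↑U) x - nervePhi 𝔘 (↑U) y) ^ 2
      ≤ ∑ _U ∈ Ft, (c * d / ν) ^ 2 := by
        apply Finset.sum_le_sum
        intro U _
        have := key U
        calc (nervePhi 𝔘 (↑U) x - nervePhi 𝔘 (↑U) y) ^ 2
            = |nervePhi 𝔘 (↑U) x - nervePhi 𝔘 (↑U) y| ^ 2 := (sq_abs _).symm
          _ ≤ (c * d / ν) ^ 2 := by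
              apply pow_le_pow_left₀ (abs_nonneg _) this
    _ = (Ft.card : ℝ) * (c * d / ν) ^ 2 := by rw [Finset.sum_const, nsmul_eq_mul]
    _ ≤ (2 * (k : ℝ) + 2) * (c * d / ν) ^ 2 :=
        mul_le_mul_of_nonneg_right hFtcard (by positivity)
    _ ≤ (ε * d) ^ 2 := by
        have hεc : ε = c ^ 2 / ν := by
          rw [eq_div_iff hν0.ne']
          exact hεν
        rw [hεc]
        have h6 : (c ^ 2 / ν * d) ^ 2 = c ^ 4 * d ^ 2 / ν ^ 2 := by
          field_simp
        have h7 : (2 * (k : ℝ) + 2) * (c * d / ν) ^ 2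
            = (2 * (k : ℝ) + 2) * c ^ 2 * d ^ 2 / ν ^ 2 := by
          field_simp
        rw [h6, h7]
        have hkc : (2 * (k : ℝ) + 2) * c ^ 2 ≤ c ^ 4 := by
          have h1 : (0:ℝ) ≤ c ^ 2 * (c ^ 2 - c + 1) :=
            mul_nonneg (sq_nonneg c) (by nlinarith [hc3])
          have h2 : 2 * (k : ℝ) + 2 = c - 1 := by rw [hc]; ring
          nlinarith [h1, h2]
        gcongr ?_ / _
        nlinarith [hkc, sq_nonneg d]
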